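/- Let f(x,w) = (1/(2πσ²√(1-ρ²)))·exp(-(x² + w² - 2ρxw)/(2σ²(1-ρ²))) be the bivariate Gaussian density with σ > 0 and |ρ| < 1, and let k(x,w) = |x-w| / (Δ²(1 + (x+w)²/(4Δ²))^{3/2}) for Δ > 0. Then ∫∫_{ℝ²} k(x,w) f(x,w) dx dw = (4/(πΔ))·√((1-ρ)/(1+ρ)) · ∫₀^∞ (1+η²)^{-3/2} · exp(-(Δ²/(σ²(1+ρ)))·η²) dη. -/

import Mathlib

open Real MeasureTheory Set Filter Convolution

lemma gauss_moment {a : ℝ} (ha : 0 < a) :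
    ∫ r in Set.Ioi (0:ℝ), r * Real.exp (-a * r^2) = (2*a)⁻¹ := by
  have hderiv : ∀ x ∈ Ici (0:ℝ), HasDerivAt (fun u : ℝ => -Real.exp (-a * u^2) / (2*a))
      (x * Real.exp (-a * x^2)) x := by
    intro x _
    have h1 : HasDerivAt (fun u : ℝ => -a * u^2) (-a * (2*x)) x := by
      simpa using ((hasDerivAt_pow 2 x).const_mul (-a))
    have h3 := (h1.exp.neg).div_const (2*a)
    refine h3.congr_deriv ?_
    rw [div_eq_iff (by positivity)]
    ring
  have htend : Tendsto (fun u : ℝ => -Real.exp (-a * u^2) / (2*a)) atTop (nhds 0) := by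
    have h1 : Tendsto (fun u : ℝ => -a * u^2) atTop atBot := by
      have := (tendsto_pow_atTop (n := 2) (by norm_num)).const_mul_atTop ha
      simpa [Function.comp_def, neg_mul] using tendsto_neg_atTop_atBot.comp this
    have h4 := ((Real.tendsto_exp_atBot.comp h1).neg).div_const (2*a)
    simpa using h4
  have := integral_Ioi_of_hasDerivAt_of_tendsto' hderiv
    ((integrable_mul_exp_neg_mul_sq ha).integrableOn) htend
  rw [this]; simp; ring

theorem stmt_3 (σ ρ Δ : ℝ) (hσ : 0 < σ) (hρ1 : -1 < ρ) (hρ2 : ρ < 1) (hΔ : 0 < Δ)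
    (f : ℝ → ℝ → ℝ)
    (hf : ∀ x w, f x w = (1 / (2 * π * σ^2 * Real.sqrt (1 - ρ^2))) *
      Real.exp (-(x^2 + w^2 - 2 * ρ * x * w) / (2 * σ^2 * (1 - ρ^2))))
    (k : ℝ → ℝ → ℝ)
    (hk : ∀ x w, k x w = |x - w| / (Δ^2 * (1 + (x + w)^2 / (4 * Δ^2)) ^ (3/2 : ℝ))) :
    ∫ x : ℝ, ∫ w : ℝ, k x w * f x w =
      (4 / (π * Δ)) * Real.sqrt ((1 - ρ) / (1 + ρ)) *
        ∫ η in Set.Ioi (0:ℝ),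
          (1 + η^2) ^ (-(3/2) : ℝ) * Real.exp (-(Δ^2 / (σ^2 * (1 + ρ))) * η^2) := by
  have hσ2 : (0:ℝ) < σ^2 := by positivity
  have h1m : (0:ℝ) < 1 - ρ := by linarith
  have h1p : (0:ℝ) < 1 + ρ := by linarith
  have h1sq : (0:ℝ) < 1 - ρ^2 := by nlinarith
  set a : ℝ := 1 / (4 * σ^2 * (1 - ρ)) with ha_def
  set b : ℝ := 1 / (4 * σ^2 * (1 + ρ)) with hb_def
  have ha : 0 < a := by rw [ha_def]; positivity
  have hb : 0 < b := by rw [hb_def]; positivity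
  set C : ℝ := 1 / (2 * π * σ^2 * Real.sqrt (1 - ρ^2)) with hC_def
  set A : ℝ → ℝ := fun u => |u| * Real.exp (-a * u^2) with hA_def
  set B : ℝ → ℝ := fun v => (1 + v^2 / (4*Δ^2)) ^ (-(3/2) : ℝ) * Real.exp (-b * v^2)
    with hB_def
  set I : ℝ := ∫ η in Set.Ioi (0:ℝ),
      (1 + η^2) ^ (-(3/2) : ℝ) * Real.exp (-(Δ^2 / (σ^2 * (1 + ρ))) * η^2) with hI_def
  -- pointwise identity
  have hpoint : ∀ x w : ℝ, k x w * f x w = (C/Δ^2) * (A (x-w) * B (x+w)) := by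
    intro x w
    rw [hk, hf]
    have hbase : (0:ℝ) < 1 + (x+w)^2/(4*Δ^2) := by positivity
    have hP : (1 + (x+w)^2/(4*Δ^2)) ^ (-(3/2) : ℝ)
        = ((1 + (x+w)^2/(4*Δ^2)) ^ ((3/2) : ℝ))⁻¹ := by
      rw [← Real.rpow_neg hbase.le]
    have hPpos : (0:ℝ) < (1 + (x+w)^2/(4*Δ^2)) ^ ((3/2) : ℝ) := Real.rpow_pos_of_pos hbase _
    have hexp : Real.exp (-a * (x-w)^2) * Real.exp (-b * (x+w)^2)
        = Real.exp (-(x^2 + w^2 - 2 * ρ * x * w) / (2 * σ^2 * (1 - ρ^2))) := by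
      rw [← Real.exp_add]
      congr 1
      rw [ha_def, hb_def]
      have h1 : (1:ℝ) - ρ^2 = (1-ρ)*(1+ρ) := by ring
      rw [h1]
      field_simp
      ring
    simp only [hA_def, hB_def, hP]
    rw [← hexp]
    field_simp
  simp only [hpoint, MeasureTheory.integral_const_mul]
  -- integrability
  have hA_int : Integrable A := by
    have h := (integrable_mul_exp_neg_mul_sq ha).abs
    refine h.congr (Filter.Eventually.of_forall fun u => ?_)
    simp [hA_def, abs_mul, abs_of_pos (Real.exp_pos _)]
  have hB_int : Integrable B := by
    refine Integrable.mono' (integrable_exp_neg_mul_sq hb) ?_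
      (Filter.Eventually.of_forall fun v => ?_)
    · apply Continuous.aestronglyMeasurable
      apply Continuous.mul
      · exact (continuous_const.add ((continuous_pow 2).div_const _)).rpow_const
          (fun v => Or.inl (by show (1:ℝ) + v^2/(4*Δ^2) ≠ 0; exact ne_of_gt (show (0:ℝ) < 1 + v^2/(4*Δ^2) by positivity)))
      · exact Real.continuous_exp.comp (continuous_const.mul (continuous_pow 2))
    · have hb1 : (1:ℝ) ≤ 1 + v^2/(4*Δ^2) := le_add_of_nonneg_right (by positivity)
      have h1 : (1 + v^2/(4*Δ^2)) ^ (-(3/2) : ℝ) ≤ 1 :=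
        Real.rpow_le_one_of_one_le_of_nonpos hb1 (by norm_num)
      have h2 : (0:ℝ) ≤ (1 + v^2/(4*Δ^2)) ^ (-(3/2) : ℝ) :=
        (Real.rpow_pos_of_pos (by positivity) _).le
      rw [Real.norm_eq_abs, hB_def]
      rw [abs_of_nonneg (by positivity)]
      calc (1 + v^2/(4*Δ^2)) ^ (-(3/2) : ℝ) * Real.exp (-b * v^2)
          ≤ 1 * Real.exp (-b * v^2) := by
            exact mul_le_mul_of_nonneg_right h1 (Real.exp_pos _).le
        _ = Real.exp (-b * v^2) := one_mul _
  -- inner integral is convolution at 2x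
  have hinner : ∀ x : ℝ, (∫ w : ℝ, A (x-w) * B (x+w)) = (A ⋆[ContinuousLinearMap.mul ℝ ℝ] B) (2*x) := by
    intro x
    have h1 : (∫ w : ℝ, A (x-w) * B (x+w))
        = ∫ w : ℝ, (fun t => A t * B (2*x - t)) (x - w) := by
      congr 1; funext w; simp only []; ring_nf
    rw [h1]
    have h2 : (∫ w : ℝ, (fun t => A t * B (2*x - t)) (x - w))
        = ∫ w : ℝ, (fun t => A t * B (2*x - t)) (x + w) := by
      rw [← integral_neg_eq_self]
      simp [sub_eq_add_neg]
    rw [h2, show (∫ w : ℝ, (fun t => A t * B (2*x - t)) (x + w))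
        = ∫ t : ℝ, A t * B (2*x - t) from integral_add_left_eq_self (fun t => A t * B (2*x - t)) x]
    rw [convolution_def]
    simp [ContinuousLinearMap.mul_apply']
  simp only [hinner]
  rw [Measure.integral_comp_mul_left (fun y => (A ⋆[ContinuousLinearMap.mul ℝ ℝ] B) y) 2]
  rw [integral_convolution (L := ContinuousLinearMap.mul ℝ ℝ) hA_int hB_int]
  -- compute ∫ A
  have hIA : (∫ u : ℝ, A u) = 1/a := by
    have h1 : (∫ u : ℝ, A u) = ∫ u : ℝ, (fun t : ℝ => t * Real.exp (-a * t^2)) |u| := by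
      congr 1; funext u; simp [hA_def, sq_abs]
    have h2 : (∫ u : ℝ, (fun t : ℝ => t * Real.exp (-a * t^2)) |u|)
        = 2 * ∫ r in Set.Ioi (0:ℝ), r * Real.exp (-a * r^2) :=
      integral_comp_abs (f := fun t : ℝ => t * Real.exp (-a * t^2))
    rw [h1.trans h2, gauss_moment ha]
    field_simp
  -- compute ∫ B
  have hIB : (∫ v : ℝ, B v) = (4*Δ) * I := by
    have h1 : (∫ v : ℝ, B v) = ∫ v : ℝ, B |v| := by
      congr 1; funext v; simp [hB_def, sq_abs]
    have h1' : (∫ v : ℝ, B |v|) = 2 * ∫ v in Set.Ioi (0:ℝ), B v :=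
      integral_comp_abs (f := B)
    have h2 : (∫ v in Set.Ioi (0:ℝ), B v) = (2*Δ) * I := by
      have h3 := integral_comp_mul_left_Ioi B 0 (b := 2*Δ) (by positivity)
      rw [mul_zero, smul_eq_mul] at h3
      have h4 : (∫ x in Set.Ioi (0:ℝ), B ((2*Δ) * x)) = I := by
        rw [hI_def]
        refine setIntegral_congr_fun measurableSet_Ioi (fun η _ => ?_)
        simp only [hB_def]
        congr 1
        · congr 1
          field_simp
          ring
        · congr 1
          rw [hb_def]
          field_simp
          ring
      rw [h4] at h3
      have h2Δ : (2*Δ) ≠ 0 := by positivity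
      field_simp at h3
      linarith
    rw [h1.trans h1', h2]; ring
  rw [hIA, hIB]
  -- final arithmetic
  have hsqrt : Real.sqrt ((1 - ρ) / (1 + ρ)) = (1 - ρ) / Real.sqrt (1 - ρ^2) := by
    have h1 : (1 - ρ) / (1 + ρ) = (1-ρ)^2 / (1 - ρ^2) := by
      rw [show (1:ℝ) - ρ^2 = (1-ρ)*(1+ρ) by ring]
      field_simp
    rw [h1, Real.sqrt_div (by positivity), Real.sqrt_sq h1m.le]
  have hsq_pos : (0:ℝ) < Real.sqrt (1 - ρ^2) := Real.sqrt_pos.mpr h1sq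
  have hsq_sq : Real.sqrt (1 - ρ^2) * Real.sqrt (1 - ρ^2) = 1 - ρ^2 :=
    Real.mul_self_sqrt h1sq.le
  rw [hsqrt, hC_def, ha_def]
  simp only [ContinuousLinearMap.mul_apply', smul_eq_mul]
  have hπ : (0:ℝ) < π := Real.pi_pos
  rw [abs_of_pos (by norm_num : (0:ℝ) < (2:ℝ)⁻¹)]
  field_simp
  ring_nf
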